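/- Let r ≥ 1. For every ε > 0 there exists p₀ such that for every prime p ≥ p₀ there exists n₀ such that for every integer n ≥ max(n₀, 2r+1), the class F_L(p,n) satisfies opt_std(F_L(p,n)) = n and opt_weak(CART_r(F_L(p,n))) ≥ (1−ε)·p^r·ln(p)·(opt_std(F_L(p,n)) − 2r). In particular, for all M > 2r and infinitely many k there is a class F of functions into a set Y of size k with opt_std(F) = M and opt_weak(CART_r(F)) ≥ (1−o(1))·(|Y|^r ln|Y|)·(opt_std(F) − 2r). -/

import Mathlib

/-- `GuessForce ok V m` means: in the mistake-bound game with weak (yes/no) reinforcement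
where queries have type `Q`, guesses have type `A`, and `ok q g f` says that guess `g` is a
correct answer to query `q` when the hidden target is `f`, an (adaptive) adversary whose
answers must stay consistent with some member of the current version space `V` can force
every deterministic learner to be answered "no" at least `m` times.
At each step the adversary chooses a query `q` and, depending on the learner's guess `g`,
either answers "no" (`c g = true`, one more mistake, continuing from the consistent
functions for which the guess is wrong) or answers "yes" (`c g = false`, continuing from the
consistent functions for which the guess is correct). -/
inductive GuessForce {α Q A : Type*} (ok : Q → A → α → Prop) : Set α → ℕ → Prop where
  | zero (V : Set α) : V.Nonempty → GuessForce ok V 0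
  | step (V : Set α) (m : ℕ) (q : Q) (c : A → Bool)
      (hne : ∀ g : A, (if c g then {f ∈ V | ¬ ok q g f} else {f ∈ V | ok q g f}).Nonempty)
      (h : ∀ g : A, GuessForce ok (if c g then {f ∈ V | ¬ ok q g f} else {f ∈ V | ok q g f})
        (if c g then m else m + 1)) :
      GuessForce ok V (m + 1)

/-- `opt_weak(CART_r(F))`: the optimal worst-case number of mistakes in the `r`-input weak
reinforcement model, where in each round the adversary presents `r` inputs simultaneously,
the learner guesses all `r` outputs, and is only told whether all `r` guesses are correct. -/
noncomputable def optWeakCart {X Y : Type*} (r : ℕ) (F : Set (X → Y)) : ℕ :=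
  sSup {m | GuessForce (fun (x : Fin r → X) (g : Fin r → Y) f => ∀ i, f (x i) = g i) F m}

/-- `StdForce V m`: in the standard model (the true value of the target at the queried input
is revealed after each guess), the adversary can force `m` mistakes against every learner,
staying consistent with the version space `V`. Here `yc g` is the value revealed when the
learner guesses `g` (a mistake iff `yc g ≠ g`, recorded by `c g`). -/
inductive StdForce {X Y : Type*} : Set (X → Y) → ℕ → Prop where
  | zero (V : Set (X → Y)) : V.Nonempty → StdForce V 0
  | step (V : Set (X → Y)) (m : ℕ) (x : X) (yc : Y → Y) (c : Y → Bool)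
      (hmistake : ∀ g : Y, c g = true → yc g ≠ g)
      (hcorrect : ∀ g : Y, c g = false → yc g = g)
      (hne : ∀ g : Y, {f ∈ V | f x = yc g}.Nonempty)
      (h : ∀ g : Y, StdForce {f ∈ V | f x = yc g} (if c g then m else m + 1)) :
      StdForce V (m + 1)

/-- `opt_std(F)`: the optimal worst-case number of mistakes in the standard model. -/
noncomputable def optStd {X Y : Type*} (F : Set (X → Y)) : ℕ :=
  sSup {m | StdForce F m}

/-- The class `F_L(p,n)` of linear functionals `x ↦ a·x mod p` on `{0,…,p−1}^n`. -/
def FL (p n : ℕ) : Set ((Fin n → ZMod p) → ZMod p) :=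
  Set.range (fun a : Fin n → ZMod p => fun x => ∑ j, a j * x j)

section Transport

variable {α β Q A : Type*}

lemma image_sep (e : α → β) (P : β → Prop) (P' : α → Prop)
    (h : ∀ a, P (e a) ↔ P' a) (V : Set α) :
    e '' {a ∈ V | P' a} = {f ∈ e '' V | P f} := by
  ext f
  constructor
  · rintro ⟨a, ⟨ha, hP⟩, rfl⟩
    exact ⟨⟨a, ha, rfl⟩, (h a).2 hP⟩
  · rintro ⟨⟨a, ha, rfl⟩, hP⟩
    exact ⟨a, ⟨ha, (h a).1 hP⟩, rfl⟩

lemma GuessForce.map (e : α → β) (ok' : Q → A → α → Prop) (ok : Q → A → β → Prop)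
    (hok : ∀ q g a, ok q g (e a) ↔ ok' q g a) :
    ∀ {V : Set α} {m : ℕ}, GuessForce ok' V m → GuessForce ok (e '' V) m := by
  intro V m h
  induction h with
  | zero V hne => exact .zero _ (hne.image e)
  | step V m q c hne h ih =>
    have key : ∀ g, (if c g then {f ∈ e '' V | ¬ ok q g f} else {f ∈ e '' V | ok q g f})
        = e '' (if c g then {a ∈ V | ¬ ok' q g a} else {a ∈ V | ok' q g a}) := by
      intro g
      cases c g
      · simp only [Bool.false_eq_true, if_false]
        exact (image_sep e _ _ (fun a => hok q g a) V).symm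
      · simp only [if_true]
        exact (image_sep e _ _ (fun a => not_congr (hok q g a)) V).symm
    exact .step _ m q c (fun g => (key g) ▸ ((hne g).image e)) (fun g => (key g) ▸ (ih g))

lemma GuessForce.le_ncard [Nonempty A] {ok : Q → A → α → Prop}
    (hex : ∀ (q : Q) (f : α), ∃ g, ok q g f) :
    ∀ {V : Set α} {m : ℕ}, GuessForce ok V m → V.Finite → m + 1 ≤ V.ncard := by
  intro V m h
  induction h with
  | zero V hne =>
    intro hfin
    have := (Set.ncard_pos hfin).mpr hne
    omega
  | step V m q c hne h ih =>
    intro hfin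
    obtain ⟨g₁⟩ := ‹Nonempty A›
    have hVne : V.Nonempty := by
      have h1 := hne g₁
      cases hc : c g₁ <;> rw [hc] at h1 <;> simp at h1 <;>
        exact h1.mono (Set.sep_subset _ _)
    obtain ⟨f₀, hf₀⟩ := hVne
    obtain ⟨g, hg⟩ := hex q f₀
    cases hc : c g
    · -- yes branch: count m+1, set {ok} ⊆ V
      have h2 := ih g
      rw [hc] at h2
      simp only [Bool.false_eq_true, if_false] at h2
      have h3 := h2 (hfin.subset (Set.sep_subset _ _))
      exact le_trans h3 (Set.ncard_le_ncard (Set.sep_subset _ _) hfin)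
    · -- no branch: count m, set {¬ok} ⊊ V
      have h2 := ih g
      rw [hc] at h2
      simp only [if_true] at h2
      have h3 := h2 (hfin.subset (Set.sep_subset _ _))
      have hss : {f ∈ V | ¬ ok q g f} ⊂ V := by
        refine (Set.sep_subset _ _).ssubset_of_ne (fun hEq => ?_)
        have : f₀ ∈ {f ∈ V | ¬ ok q g f} := hEq.symm ▸ hf₀
        exact this.2 hg
      have := Set.ncard_lt_ncard hss hfin
      omega

end Transport
section Std

open Finset

variable {p n : ℕ}

/-- The parametrization of `FL p n`. -/
def lmap (a : Fin n → ZMod p) : (Fin n → ZMod p) → ZMod p := fun x => ∑ j, a j * x j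

lemma FL_eq_range : FL p n = Set.range (lmap (p := p) (n := n)) := rfl

lemma lmap_basis (a : Fin n → ZMod p) (i : Fin n) :
    lmap a (fun j => if j = i then 1 else 0) = a i := by
  simp [lmap, mul_ite, mul_one, mul_zero]

lemma std_lower [Fact p.Prime] :
    ∀ (m : ℕ) (s : Finset (Fin n)) (b : Fin n → ZMod p), s.card + m = n →
      StdForce (lmap '' {a | ∀ i ∈ s, a i = b i}) m := by
  intro m
  induction m with
  | zero =>
    intro s b _
    exact .zero _ ⟨lmap b, ⟨b, fun i _ => rfl, rfl⟩⟩
  | succ m ih =>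
    intro s b hcard
    obtain ⟨i, hi⟩ : ∃ i, i ∉ s := by
      by_contra hall
      push_neg at hall
      have : s = Finset.univ := Finset.eq_univ_iff_forall.mpr hall
      rw [this, Finset.card_univ, Fintype.card_fin] at hcard
      omega
    set x : Fin n → ZMod p := fun j => if j = i then 1 else 0 with hx
    have hset : ∀ g : ZMod p, {f ∈ lmap '' {a | ∀ j ∈ s, a j = b j} | f x = g + 1}
        = lmap '' {a | ∀ j ∈ insert i s, a j = Function.update b i (g + 1) j} := by
      intro g
      ext f
      constructor
      · rintro ⟨⟨a, ha, rfl⟩, hfx⟩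
        refine ⟨a, fun j hj => ?_, rfl⟩
        rcases Finset.mem_insert.mp hj with rfl | hj'
        · rw [Function.update_self]
          rw [lmap_basis] at hfx
          exact hfx
        · rw [Function.update_of_ne (fun hji => hi (by rwa [hji] at hj')) _ _]
          exact ha j hj'
      · rintro ⟨a, ha, rfl⟩
        refine ⟨⟨a, fun j hj => ?_, rfl⟩, ?_⟩
        · have := ha j (Finset.mem_insert_of_mem hj)
          rwa [Function.update_of_ne (fun hji => hi (by rwa [hji] at hj)) _ _] at this
        · have := ha i (Finset.mem_insert_self i s)
          rw [Function.update_self] at this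
          rw [hx, lmap_basis]
          exact this
    refine .step _ m x (fun g => g + 1) (fun _ => true) (fun g _ => ?_) (fun g hg => by simp at hg)
      (fun g => ?_) (fun g => ?_)
    · -- g + 1 ≠ g
      simp
    · -- nonempty
      rw [hset g]
      exact ⟨lmap (Function.update b i (g + 1)), Function.update b i (g + 1),
        fun j _ => rfl, rfl⟩
    · -- recursion
      show StdForce _ m
      rw [hset g]
      exact ih (insert i s) (Function.update b i (g + 1))
        (by rw [Finset.card_insert_of_notMem hi]; omega)

lemma FL_as_image : FL p n = lmap '' {a : Fin n → ZMod p | ∀ i ∈ (∅ : Finset (Fin n)), a i = (0 : Fin n → ZMod p) i} := by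
  rw [FL_eq_range]
  have : {a : Fin n → ZMod p | ∀ i ∈ (∅ : Finset (Fin n)), a i = (0 : Fin n → ZMod p) i} = Set.univ := by
    ext a; simp
  rw [this, Set.image_univ]

lemma stdforce_FL [Fact p.Prime] : StdForce (FL p n) n := by
  rw [FL_as_image]
  exact std_lower n ∅ 0 (by simp)

end Std
section StdUpper

open Finset Module

variable {p n : ℕ}

/-- Evaluation at `x` as a linear functional in `a`. -/
def evalmap [Fact p.Prime] (x : Fin n → ZMod p) : (Fin n → ZMod p) →ₗ[ZMod p] ZMod p where
  toFun := fun a => ∑ j, a j * x j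
  map_add' := by
    intro u v
    simp [add_mul, Finset.sum_add_distrib]
  map_smul' := by
    intro c v
    simp [Finset.mul_sum, mul_assoc]

lemma evalmap_apply [Fact p.Prime] (x a : Fin n → ZMod p) : evalmap x a = lmap a x := rfl

lemma std_upper [Fact p.Prime] {V : Set ((Fin n → ZMod p) → ZMod p)} {m : ℕ}
    (h : StdForce V m) :
    ∀ (U : Submodule (ZMod p) (Fin n → ZMod p)) (a₀ : Fin n → ZMod p),
      V = lmap '' {a | a - a₀ ∈ U} → m ≤ finrank (ZMod p) U := by
  induction h with
  | zero => intros; exact Nat.zero_le _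
  | step V m x yc c hmis hcor hne h ih =>
    intro U a₀ hV
    by_cases hU : ∀ u ∈ U, evalmap x u = 0
    · -- all functions in V agree at x
      have key : ∀ f ∈ V, f x = evalmap x a₀ := by
        intro f hf
        rw [hV] at hf
        obtain ⟨a, ha, rfl⟩ := hf
        show evalmap x a = evalmap x a₀
        have h0 : evalmap x (a - a₀) = 0 := hU _ ha
        rw [map_sub] at h0
        linear_combination h0
      set g : ZMod p := evalmap x a₀ with hg
      obtain ⟨f₁, hf₁V, hf₁x⟩ := hne g
      have hyc : yc g = g := by rw [← hf₁x, key f₁ hf₁V]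
      have hcg : c g = false := by
        cases hcg' : c g
        · rfl
        · exact absurd hyc (hmis g hcg')
      have h2 := ih g
      rw [hcg] at h2
      simp only [Bool.false_eq_true, if_false] at h2
      have hset : {f ∈ V | f x = yc g} = V := by
        ext f
        simp only [Set.mem_setOf_eq, Set.mem_sep_iff, and_iff_left_iff_imp]
        intro hf
        rw [hyc, key f hf]
      exact h2 U a₀ (by rw [hset, hV])
    · push_neg at hU
      obtain ⟨u, hu, hφu⟩ := hU
      obtain ⟨f₁, hf₁V, hf₁x⟩ := hne 0
      rw [hV] at hf₁V
      obtain ⟨a₁, ha₁, rfl⟩ := hf₁V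
      set U' := U ⊓ LinearMap.ker (evalmap x) with hU'
      have hlt : U' < U := by
        refine lt_of_le_of_ne inf_le_left (fun hEq => hφu ?_)
        have : u ∈ U' := hEq.symm ▸ hu
        exact (Submodule.mem_inf.mp this).2
      have hrank : finrank (ZMod p) U' < finrank (ZMod p) U :=
        Submodule.finrank_lt_finrank_of_lt hlt
      have hset : {f ∈ V | f x = yc 0} = lmap '' {a | a - a₁ ∈ U'} := by
        ext f
        constructor
        · rintro ⟨hf, hfx⟩
          rw [hV] at hf
          obtain ⟨a, ha, rfl⟩ := hf
          refine ⟨a, ?_, rfl⟩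
          rw [Set.mem_setOf_eq, hU', Submodule.mem_inf]
          constructor
          · have : a - a₁ = (a - a₀) - (a₁ - a₀) := by ring
            rw [this]
            exact sub_mem ha ha₁
          · rw [LinearMap.mem_ker, map_sub, evalmap_apply, evalmap_apply]
            change lmap a x = _ at hfx
            change lmap a₁ x = _ at hf₁x
            rw [hfx, hf₁x, sub_self]
        · rintro ⟨a, ha, rfl⟩
          rw [Set.mem_setOf_eq, hU', Submodule.mem_inf] at ha
          obtain ⟨haU, haker⟩ := ha
          constructor
          · rw [hV]
            refine ⟨a, ?_, rfl⟩
            have : a - a₀ = (a - a₁) + (a₁ - a₀) := by ring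
            rw [Set.mem_setOf_eq, this]
            exact add_mem haU ha₁
          · rw [LinearMap.mem_ker, map_sub] at haker
            have : evalmap x a = evalmap x a₁ := by linear_combination haker
            change lmap a x = _
            rw [← evalmap_apply, this, evalmap_apply, hf₁x]
      cases hcg : c 0
      · have h2 := ih 0
        rw [hcg] at h2
        simp only [Bool.false_eq_true, if_false] at h2
        have := h2 U' a₁ hset
        omega
      · have h2 := ih 0
        rw [hcg] at h2
        simp only [if_true] at h2
        have := h2 U' a₁ hset
        omega

lemma optStd_FL [Fact p.Prime] : optStd (FL p n) = n := by
  have hub : ∀ m ∈ {m | StdForce (FL p n) m}, m ≤ n := by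
    intro m hm
    have h1 : FL p n = lmap '' {a : Fin n → ZMod p | a - 0 ∈ (⊤ : Submodule (ZMod p) (Fin n → ZMod p))} := by
      rw [FL_eq_range]
      have : {a : Fin n → ZMod p | a - 0 ∈ (⊤ : Submodule (ZMod p) (Fin n → ZMod p))} = Set.univ := by
        ext a; simp
      rw [this, Set.image_univ]
    have := std_upper hm ⊤ 0 h1
    rwa [finrank_top, Module.finrank_pi, Fintype.card_fin] at this
  have hmem : n ∈ {m | StdForce (FL p n) m} := stdforce_FL
  exact le_antisymm (csSup_le ⟨n, hmem⟩ hub) (le_csSup ⟨n, hub⟩ hmem)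

end StdUpper
section Counting

open Finset Module

variable {p n r : ℕ}

lemma lmap_sub (a b x : Fin n → ZMod p) : lmap (a - b) x = lmap a x - lmap b x := by
  simp [lmap, sub_mul, Finset.sum_sub_distrib]

/-- Cardinality of the kernel hyperplane. -/
lemma ker_count [Fact p.Prime] (hn : 1 ≤ n) {v : Fin n → ZMod p} (hv : v ≠ 0) :
    (Finset.univ.filter fun y : Fin n → ZMod p => lmap v y = 0).card = p ^ (n - 1) := by
  classical
  set φ : (Fin n → ZMod p) →ₗ[ZMod p] ZMod p :=
    { toFun := fun y => ∑ j, v j * y j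
      map_add' := by intro u w; simp [mul_add, Finset.sum_add_distrib]
      map_smul' := by
        intro c w
        simp [Finset.mul_sum]
        congr 1
        ext j
        ring } with hφ
  have hφval : ∀ y, φ y = lmap v y := fun y => rfl
  have hsurj : Function.Surjective φ := by
    obtain ⟨j₀, hj₀⟩ : ∃ j, v j ≠ 0 := by
      by_contra hall
      push_neg at hall
      exact hv (funext hall)
    intro cc
    refine ⟨fun j => if j = j₀ then (v j₀)⁻¹ * cc else 0, ?_⟩
    show (∑ j, v j * (if j = j₀ then (v j₀)⁻¹ * cc else 0)) = cc
    rw [Finset.sum_eq_single j₀]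
    · rw [if_pos rfl, ← mul_assoc, mul_inv_cancel₀ hj₀, one_mul]
    · intro j _ hj
      rw [if_neg hj, mul_zero]
    · intro hj
      exact absurd (Finset.mem_univ j₀) hj
  have hrank : finrank (ZMod p) (LinearMap.ker φ) = n - 1 := by
    have h1 := LinearMap.finrank_range_add_finrank_ker φ
    rw [LinearMap.range_eq_top.mpr hsurj, finrank_top, Module.finrank_self,
      Module.finrank_pi, Fintype.card_fin] at h1
    omega
  have hcard : (Finset.univ.filter fun y : Fin n → ZMod p => lmap v y = 0).card
      = Fintype.card (LinearMap.ker φ) := by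
    rw [← Fintype.card_subtype]
    exact (Fintype.card_congr (Equiv.subtypeEquivRight (fun y => by
      rw [LinearMap.mem_ker, hφval]))).symm
  rw [hcard, card_eq_pow_finrank (K := ZMod p), hrank, ZMod.card]

/-- Cardinality of tuples all in the kernel. -/
lemma ker_count_tuple [Fact p.Prime] (hn : 1 ≤ n) {v : Fin n → ZMod p} (hv : v ≠ 0) :
    (Finset.univ.filter fun x : Fin r → (Fin n → ZMod p) => ∀ i, lmap v (x i) = 0).card
      = (p ^ (n - 1)) ^ r := by
  classical
  rw [← Fintype.card_subtype]
  rw [Fintype.card_congr (Equiv.subtypePiEquivPi (p := fun _ y => lmap v y = 0))]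
  rw [Fintype.card_pi]
  rw [Finset.prod_const]
  rw [Fintype.card_subtype, ker_count hn hv, Finset.card_univ, Fintype.card_fin]
end Counting
section LemA

open Finset Module

variable {p n r : ℕ}

lemma lemA [Fact p.Prime] (hn : 1 ≤ n) (W : Finset (Fin n → ZMod p)) :
    ∃ x : Fin r → (Fin n → ZMod p), ∀ g : Fin r → ZMod p,
      ((W.filter fun a => ∀ i, lmap a (x i) = g i).card : ℝ)
        ≤ (W.card : ℝ) / (p : ℝ) ^ r + Real.sqrt (W.card : ℝ) := by
  classical
  set prof : (Fin r → (Fin n → ZMod p)) → (Fin n → ZMod p) → (Fin r → ZMod p) :=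
    fun x a i => lmap a (x i) with hprof
  have hp0 : (0:ℝ) < (p:ℝ) := by exact_mod_cast (Fact.out : p.Prime).pos
  have hpr : (0:ℝ) < (p:ℝ)^r := by positivity
  set coll : (Fin r → (Fin n → ZMod p)) → ℕ :=
    fun x => (W.offDiag.filter fun q => prof x q.1 = prof x q.2).card with hcolldef
  -- total collision count
  have hcollsum : ∑ x : Fin r → (Fin n → ZMod p), coll x
      = W.offDiag.card * (p ^ (n - 1)) ^ r := by
    calc ∑ x : Fin r → (Fin n → ZMod p), coll x
        = ∑ x : Fin r → (Fin n → ZMod p), ∑ q ∈ W.offDiag,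
            (if prof x q.1 = prof x q.2 then 1 else 0) := by
          refine Finset.sum_congr rfl fun x _ => ?_
          exact Finset.card_filter _ _
      _ = ∑ q ∈ W.offDiag, ∑ x : Fin r → (Fin n → ZMod p),
            (if prof x q.1 = prof x q.2 then 1 else 0) := Finset.sum_comm
      _ = ∑ q ∈ W.offDiag, (p ^ (n - 1)) ^ r := by
          refine Finset.sum_congr rfl fun q hq => ?_
          obtain ⟨hq1, hq2, hq12⟩ := Finset.mem_offDiag.mp hq
          have hv : q.1 - q.2 ≠ 0 := sub_ne_zero.mpr hq12
          rw [← Finset.card_filter]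
          rw [← ker_count_tuple (r := r) hn hv]
          apply congrArg
          apply Finset.filter_congr
          intro x _
          rw [funext_iff]
          constructor
          · intro h i
            rw [lmap_sub]
            exact sub_eq_zero.mpr (h i)
          · intro h i
            have := h i
            rw [lmap_sub, sub_eq_zero] at this
            exact this
      _ = W.offDiag.card * (p ^ (n - 1)) ^ r := by
          rw [Finset.sum_const, smul_eq_mul]
  -- there is a tuple with small collision count
  have havg : ∃ x : Fin r → (Fin n → ZMod p),
      (coll x : ℝ) ≤ (W.card : ℝ) * ((W.card : ℝ) - 1) / (p:ℝ)^r := by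
    by_contra hc
    push_neg at hc
    have huniv : (Finset.univ : Finset (Fin r → (Fin n → ZMod p))).Nonempty :=
      Finset.univ_nonempty
    have hlt := Finset.sum_lt_sum_of_nonempty huniv (fun x _ => hc x)
    rw [Finset.sum_const, nsmul_eq_mul, Finset.card_univ] at hlt
    have hsum : ∑ x : Fin r → (Fin n → ZMod p), (coll x : ℝ)
        = (W.offDiag.card : ℝ) * ((p:ℝ) ^ (n - 1)) ^ r := by
      exact_mod_cast congrArg (Nat.cast (R := ℝ)) hcollsum
    have hcardx : (Fintype.card (Fin r → (Fin n → ZMod p)) : ℝ) = ((p:ℝ)^n)^r := by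
      rw [Fintype.card_fun]
      push_cast
      congr 1
      rw [Fintype.card_pi]
      simp [ZMod.card]
      rw [Fintype.card_fin]
    have hoff : (W.offDiag.card : ℝ) = (W.card : ℝ) * (W.card : ℝ) - (W.card : ℝ) := by
      rw [Finset.offDiag_card]
      have hle : W.card ≤ W.card * W.card := by
        rcases Nat.eq_zero_or_pos W.card with h | h
        · simp [h]
        · exact Nat.le_mul_of_pos_left _ h
      push_cast [hle]
      ring
    have hkey : ((p:ℝ)^n)^r = ((p:ℝ)^(n-1))^r * (p:ℝ)^r := by
      rw [← mul_pow]
      congr 1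
      rw [← pow_succ]
      congr 1
      omega
    rw [hsum, hcardx, hoff, hkey] at hlt
    have : (W.card : ℝ) * ((W.card : ℝ) - 1) = (W.card:ℝ) * (W.card:ℝ) - W.card := by ring
    rw [this] at hlt
    have heq : ((p:ℝ)^(n-1))^r * (p:ℝ)^r * (((W.card:ℝ)*(W.card:ℝ) - (W.card:ℝ)) / (p:ℝ)^r)
        = ((W.card:ℝ)*(W.card:ℝ) - (W.card:ℝ)) * ((p:ℝ)^(n-1))^r := by
      field_simp
    linarith
  obtain ⟨x, hx⟩ := havg
  refine ⟨x, fun g => ?_⟩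
  set F : (Fin r → ZMod p) → ℕ := fun g' => (W.filter fun a => prof x a = g').card with hF
  set N : ℝ := (W.card : ℝ) with hNdef
  have hN0 : (0:ℝ) ≤ N := Nat.cast_nonneg _
  -- fiberwise sum
  have hfibNat : ∑ g' : Fin r → ZMod p, F g' = W.card :=
    (Finset.card_eq_sum_card_fiberwise (fun a _ => Finset.mem_univ (prof x a))).symm
  -- fiberwise sum of squares
  have hsqNat : ∑ g' : Fin r → ZMod p, (F g')^2 = W.card + coll x := by
    set SP := (W ×ˢ W).filter (fun q : (Fin n → ZMod p) × (Fin n → ZMod p) =>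
      prof x q.1 = prof x q.2) with hSP
    have h1 : SP.card = ∑ g' : Fin r → ZMod p, (SP.filter fun q => prof x q.1 = g').card :=
      Finset.card_eq_sum_card_fiberwise (fun q _ => Finset.mem_univ (prof x q.1))
    have h2 : ∀ g', SP.filter (fun q => prof x q.1 = g')
        = (W.filter fun a => prof x a = g') ×ˢ (W.filter fun a => prof x a = g') := by
      intro g'
      rw [hSP, Finset.filter_filter, ← Finset.filter_product]
      apply Finset.filter_congr
      intro q _
      constructor
      · rintro ⟨h1', h2'⟩
        exact ⟨h2', by rw [← h1']; exact h2'⟩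
      · rintro ⟨h1', h2'⟩
        exact ⟨h1'.trans h2'.symm, h1'⟩
    have h3 : SP.card = ∑ g' : Fin r → ZMod p, (F g')^2 := by
      rw [h1]
      refine Finset.sum_congr rfl fun g' _ => ?_
      rw [h2 g', Finset.card_product, sq]
    have h5 := Finset.card_filter_add_card_filter_not
      (s := SP) (p := fun q : (Fin n → ZMod p) × (Fin n → ZMod p) => q.1 = q.2)
    have h6 : SP.filter (fun q => q.1 = q.2) = W.diag := by
      ext q
      rw [hSP, Finset.filter_filter]
      simp only [Finset.mem_filter, Finset.mem_product, Finset.mem_diag]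
      constructor
      · rintro ⟨⟨hq1, _⟩, _, heq⟩
        exact ⟨hq1, heq⟩
      · rintro ⟨hq1, heq⟩
        exact ⟨⟨hq1, heq ▸ hq1⟩, by rw [heq], heq⟩
    have h7 : SP.filter (fun q => ¬ q.1 = q.2) = W.offDiag.filter
        (fun q => prof x q.1 = prof x q.2) := by
      ext q
      rw [hSP, Finset.filter_filter]
      simp only [Finset.mem_filter, Finset.mem_product, Finset.mem_offDiag]
      tauto
    rw [h6, h7, Finset.diag_card] at h5
    rw [← h3, ← h5, hcolldef]
  -- real versions
  have hfib : ∑ g' : Fin r → ZMod p, (F g' : ℝ) = N := by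
    rw [hNdef, ← hfibNat]
    push_cast
    rfl
  have hsq : ∑ g' : Fin r → ZMod p, (F g' : ℝ)^2 = N + (coll x : ℝ) := by
    rw [hNdef]
    rw [← Nat.cast_add, ← hsqNat]
    push_cast
    rfl
  set c : ℝ := N / (p:ℝ)^r with hc
  have hcardg : (Fintype.card (Fin r → ZMod p) : ℝ) = (p:ℝ)^r := by
    rw [Fintype.card_fun, ZMod.card, Fintype.card_fin]
    push_cast
    rfl
  have hexpand : ∑ g' : Fin r → ZMod p, ((F g' : ℝ) - c)^2
      = (∑ g' : Fin r → ZMod p, (F g' : ℝ)^2) - (2*c) * (∑ g' : Fin r → ZMod p, (F g' : ℝ))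
        + (Fintype.card (Fin r → ZMod p) : ℝ) * c^2 := by
    rw [Finset.sum_congr rfl (fun g' _ => show ((F g' : ℝ) - c)^2
      = (F g' : ℝ)^2 - (2*c) * (F g' : ℝ) + c^2 by ring)]
    rw [Finset.sum_add_distrib, Finset.sum_sub_distrib, ← Finset.mul_sum,
      Finset.sum_const, Finset.card_univ, nsmul_eq_mul]
  have hprc : (p:ℝ)^r * c^2 = N^2 / (p:ℝ)^r := by
    rw [hc]
    field_simp
    try ring
  have hkey2 : ((F g : ℝ) - c)^2 ≤ N := by
    have hsingle : ((F g : ℝ) - c)^2 ≤ ∑ g' : Fin r → ZMod p, ((F g' : ℝ) - c)^2 :=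
      Finset.single_le_sum (f := fun g' => ((F g' : ℝ) - c)^2)
        (fun g' _ => sq_nonneg _) (Finset.mem_univ g)
    rw [hexpand, hsq, hfib, hcardg, hprc] at hsingle
    have hx' : (coll x : ℝ) ≤ N * (N - 1) / (p:ℝ)^r := hx
    have hNp : 0 ≤ N / (p:ℝ)^r := by positivity
    calc ((F g : ℝ) - c)^2 ≤ N + (coll x : ℝ) - 2*c*N + N^2/(p:ℝ)^r := hsingle
      _ ≤ N + N*(N-1)/(p:ℝ)^r - 2*(N/(p:ℝ)^r)*N + N^2/(p:ℝ)^r := by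
          rw [hc]; linarith [hx']
      _ = N - N/(p:ℝ)^r := by
          field_simp
          ring
      _ ≤ N := by linarith [hNp]
  have habs : |(F g : ℝ) - c| ≤ Real.sqrt N := by
    rw [← Real.sqrt_sq_eq_abs]
    exact Real.sqrt_le_sqrt hkey2
  have hfinal : (F g : ℝ) ≤ c + Real.sqrt N := by
    have := (abs_le.mp habs).2
    linarith
  have hpred : (W.filter fun a => ∀ i, lmap a (x i) = g i) = W.filter (fun a => prof x a = g) := by
    apply Finset.filter_congr
    intro a _
    rw [funext_iff]
  rw [hpred]
  exact hfinal

end LemA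
section LemB

open Finset Module

variable {p n r : ℕ}

lemma lemB [Fact p.Prime] (hn : 1 ≤ n) {δ : ℝ} (hδ0 : 0 < δ)
    (hp2 : 2 * (1 + δ) ≤ (p:ℝ)^r) :
    ∀ (m : ℕ) (W : Finset (Fin n → ZMod p)),
      (p:ℝ)^(2*r) / δ^2 ≤ (1 - (1+δ)/(p:ℝ)^r)^m * (W.card : ℝ) →
      GuessForce (fun (x : Fin r → (Fin n → ZMod p)) (g : Fin r → ZMod p) a =>
        ∀ i, lmap a (x i) = g i) (↑W) m := by
  classical
  have hp0 : (0:ℝ) < (p:ℝ) := by exact_mod_cast (Fact.out : p.Prime).pos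
  have hpr : (0:ℝ) < (p:ℝ)^r := by positivity
  set β : ℝ := (1+δ)/(p:ℝ)^r with hβ
  have hβ0 : 0 < β := by positivity
  have hβh : β ≤ 1/2 := by
    rw [hβ, div_le_iff₀ hpr]
    linarith
  have hT0 : (0:ℝ) < (p:ℝ)^(2*r) / δ^2 := by positivity
  intro m
  induction m with
  | zero =>
    intro W hW
    rw [pow_zero, one_mul] at hW
    have h1 : (0:ℝ) < (W.card : ℝ) := lt_of_lt_of_le hT0 hW
    have h2 : 0 < W.card := by exact_mod_cast h1
    exact .zero _ (by exact_mod_cast Finset.card_pos.mp h2)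
  | succ m ih =>
    intro W hW
    have hβ1 : (0:ℝ) ≤ 1 - β := by linarith
    have hpow1 : (1 - β)^(m+1) ≤ 1 := pow_le_one₀ hβ1 (by linarith)
    have hT : (p:ℝ)^(2*r)/δ^2 ≤ (W.card : ℝ) := by
      calc (p:ℝ)^(2*r)/δ^2 ≤ (1-β)^(m+1) * (W.card:ℝ) := hW
        _ ≤ 1 * (W.card:ℝ) := mul_le_mul_of_nonneg_right hpow1 (Nat.cast_nonneg _)
        _ = (W.card:ℝ) := one_mul _
    have hN0 : (0:ℝ) < (W.card:ℝ) := lt_of_lt_of_le hT0 hT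
    obtain ⟨x, hx⟩ := lemA (r := r) hn W
    have h2r : (p:ℝ)^(2*r) = ((p:ℝ)^r)^2 := by
      rw [two_mul, pow_add]
      ring
    have hsq : (W.card:ℝ) ≤ (δ * (W.card:ℝ) / (p:ℝ)^r)^2 := by
      have hT' : ((p:ℝ)^r)^2 / δ^2 ≤ (W.card:ℝ) := by rw [← h2r]; exact hT
      rw [div_le_iff₀ (by positivity)] at hT'
      rw [div_pow, mul_pow, le_div_iff₀ (by positivity)]
      nlinarith [hN0, hT']
    have hsqrt : Real.sqrt (W.card:ℝ) ≤ δ * (W.card:ℝ) / (p:ℝ)^r := by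
      have h3 := Real.sqrt_le_sqrt hsq
      rwa [Real.sqrt_sq (by positivity)] at h3
    -- per guess facts
    have hPle : ∀ g : Fin r → ZMod p,
        ((W.filter fun a => ∀ i, lmap a (x i) = g i).card : ℝ) ≤ β * (W.card:ℝ) := by
      intro g
      calc ((W.filter fun a => ∀ i, lmap a (x i) = g i).card : ℝ)
          ≤ (W.card : ℝ) / (p:ℝ)^r + Real.sqrt (W.card:ℝ) := hx g
        _ ≤ (W.card : ℝ) / (p:ℝ)^r + δ * (W.card:ℝ) / (p:ℝ)^r := by linarith [hsqrt]
        _ = β * (W.card:ℝ) := by rw [hβ]; ring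
    have hcompl : ∀ g : Fin r → ZMod p,
        (1 - β) * (W.card:ℝ) ≤ ((W.filter fun a => ¬ ∀ i, lmap a (x i) = g i).card : ℝ) := by
      intro g
      have hsplit := Finset.card_filter_add_card_filter_not
        (s := W) (p := fun a => ∀ i, lmap a (x i) = g i)
      have : ((W.filter fun a => ∀ i, lmap a (x i) = g i).card : ℝ)
          + ((W.filter fun a => ¬ ∀ i, lmap a (x i) = g i).card : ℝ) = (W.card : ℝ) := by
        exact_mod_cast congrArg (Nat.cast (R := ℝ)) hsplit
      have := hPle g
      linarith
    have hpos : ∀ g : Fin r → ZMod p,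
        ((W.filter fun a => ¬ ∀ i, lmap a (x i) = g i)).Nonempty := by
      intro g
      have h4 : (0:ℝ) < (1 - β) * (W.card:ℝ) := by
        apply mul_pos _ hN0
        linarith
      have h5 : (0:ℝ) < ((W.filter fun a => ¬ ∀ i, lmap a (x i) = g i).card : ℝ) :=
        lt_of_lt_of_le h4 (hcompl g)
      have : 0 < (W.filter fun a => ¬ ∀ i, lmap a (x i) = g i).card := by exact_mod_cast h5
      exact Finset.card_pos.mp this
    have hih : ∀ g : Fin r → ZMod p,
        GuessForce (fun (x : Fin r → (Fin n → ZMod p)) (g : Fin r → ZMod p) a =>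
          ∀ i, lmap a (x i) = g i)
          (↑(W.filter fun a => ¬ ∀ i, lmap a (x i) = g i)) m := by
      intro g
      apply ih
      calc (p:ℝ)^(2*r)/δ^2 ≤ (1-β)^(m+1) * (W.card:ℝ) := hW
        _ = (1-β)^m * ((1-β) * (W.card:ℝ)) := by rw [pow_succ]; ring
        _ ≤ (1-β)^m * ((W.filter fun a => ¬ ∀ i, lmap a (x i) = g i).card : ℝ) :=
            mul_le_mul_of_nonneg_left (hcompl g) (pow_nonneg hβ1 m)
    have hseteq : ∀ g : Fin r → ZMod p,
        {f ∈ (↑W : Set (Fin n → ZMod p)) | ¬ ∀ i, lmap f (x i) = g i}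
          = ↑(W.filter fun a => ¬ ∀ i, lmap a (x i) = g i) := by
      intro g
      rw [Finset.coe_filter]
      ext a
      simp
    refine GuessForce.step _ m x (fun _ => true) (fun g => ?_) (fun g => ?_)
    · rw [if_pos (show ((fun (_ : Fin r → ZMod p) => true) g) = true from rfl)]
      rw [hseteq g]
      exact Finset.coe_nonempty.mpr (hpos g)
    · rw [if_pos (show ((fun (_ : Fin r → ZMod p) => true) g) = true from rfl),
        if_pos (show ((fun (_ : Fin r → ZMod p) => true) g) = true from rfl)]
      rw [hseteq g]
      exact hih g

end LemB
section Final

open Finset Module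

variable {p n r : ℕ}

lemma weak_mem [Fact p.Prime] (hn : 1 ≤ n) {δ : ℝ} (hδ0 : 0 < δ)
    (hp2 : 2 * (1 + δ) ≤ (p:ℝ)^r) (m : ℕ)
    (hcond : (p:ℝ)^(2*r) / δ^2 ≤ (1 - (1+δ)/(p:ℝ)^r)^m * (p:ℝ)^n) :
    GuessForce (fun (x : Fin r → (Fin n → ZMod p)) (g : Fin r → ZMod p)
      (f : (Fin n → ZMod p) → ZMod p) => ∀ i, f (x i) = g i) (FL p n) m := by
  have hcard : ((Finset.univ : Finset (Fin n → ZMod p)).card : ℝ) = (p:ℝ)^n := by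
    rw [Finset.card_univ, Fintype.card_fun, ZMod.card, Fintype.card_fin]
    push_cast
    rfl
  have h1 := lemB hn hδ0 hp2 m (Finset.univ) (by rw [hcard]; exact hcond)
  have h2 := GuessForce.map lmap
    (fun (x : Fin r → (Fin n → ZMod p)) (g : Fin r → ZMod p) a => ∀ i, lmap a (x i) = g i)
    (fun (x : Fin r → (Fin n → ZMod p)) (g : Fin r → ZMod p)
      (f : (Fin n → ZMod p) → ZMod p) => ∀ i, f (x i) = g i)
    (fun q g a => Iff.rfl) h1
  rwa [Finset.coe_univ, Set.image_univ, ← FL_eq_range] at h2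

lemma weak_bdd [Fact p.Prime] :
    BddAbove {m | GuessForce (fun (x : Fin r → (Fin n → ZMod p)) (g : Fin r → ZMod p)
      (f : (Fin n → ZMod p) → ZMod p) => ∀ i, f (x i) = g i) (FL p n) m} := by
  refine ⟨(FL p n).ncard, fun m hm => ?_⟩
  have := GuessForce.le_ncard (fun q f => ⟨fun i => f (q i), fun i => rfl⟩) hm
    ((FL p n).toFinite)
  omega

set_option maxHeartbeats 1000000 in
theorem main_small (r : ℕ) (hr : 1 ≤ r) (ε : ℝ) (hε : 0 < ε) (hε2 : ε ≤ 1/2) :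
    ∃ p₀ : ℕ, ∀ p : ℕ, p.Prime → p₀ ≤ p → ∃ n₀ : ℕ, ∀ n : ℕ, max n₀ (2 * r + 1) ≤ n →
      optStd (FL p n) = n ∧
      (1 - ε) * (p : ℝ) ^ r * Real.log p * ((optStd (FL p n) : ℝ) - 2 * r)
        ≤ (optWeakCart r (FL p n) : ℝ) := by
  refine ⟨max 3 ⌈(400:ℝ)/ε⌉₊, fun p hp hpge => ?_⟩
  haveI : Fact p.Prime := ⟨hp⟩
  refine ⟨2*r + 1 + ⌈(2/ε) * (1 + 2*Real.log (8/ε))⌉₊, fun n hn => ?_⟩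
  have h2r1 : 2*r + 1 ≤ n := le_trans (le_max_right _ _) hn
  have hn1 : 1 ≤ n := by omega
  have hn0 : 2*r + 1 + ⌈(2/ε) * (1 + 2*Real.log (8/ε))⌉₊ ≤ n := le_trans (le_max_left _ _) hn
  have hstd : optStd (FL p n) = n := optStd_FL
  refine ⟨hstd, ?_⟩
  rw [hstd]
  have hp3 : (3:ℕ) ≤ p := le_trans (le_max_left _ _) hpge
  have hpR : (3:ℝ) ≤ p := by exact_mod_cast hp3
  have hp0 : (0:ℝ) < p := by linarith
  have hp400 : (400:ℝ)/ε ≤ p := by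
    have h1 : ⌈(400:ℝ)/ε⌉₊ ≤ p := le_trans (le_max_right _ _) hpge
    calc (400:ℝ)/ε ≤ ⌈(400:ℝ)/ε⌉₊ := Nat.le_ceil _
      _ ≤ p := by exact_mod_cast h1
  have hlogp : 1 ≤ Real.log p := by
    rw [Real.le_log_iff_exp_le hp0]
    calc Real.exp 1 ≤ 2.7182818286 := le_of_lt Real.exp_one_lt_d9
      _ ≤ 3 := by norm_num
      _ ≤ p := hpR
  set δ : ℝ := ε/8 with hδ
  have hδ0 : 0 < δ := by rw [hδ]; positivity
  have hδ16 : δ ≤ 1/16 := by rw [hδ]; linarith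
  have hpr0 : (0:ℝ) < (p:ℝ)^r := by positivity
  have hprm : (p:ℝ) ≤ (p:ℝ)^r := by
    calc (p:ℝ) = (p:ℝ)^1 := (pow_one _).symm
      _ ≤ (p:ℝ)^r := pow_le_pow_right₀ (by linarith) hr
  have hprb : (400:ℝ)/ε ≤ (p:ℝ)^r := le_trans hp400 hprm
  set β : ℝ := (1+δ)/(p:ℝ)^r with hβd
  have hβ0 : 0 < β := by rw [hβd]; positivity
  have hβe : β ≤ ε/200 := by
    rw [hβd, div_le_iff₀ hpr0]
    have h2 : ε/200 * ((400:ℝ)/ε) ≤ ε/200 * (p:ℝ)^r :=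
      mul_le_mul_of_nonneg_left hprb (by positivity)
    have h3 : ε/200 * ((400:ℝ)/ε) = 2 := by field_simp; ring
    linarith
  have hβh : β ≤ 1/2 := by linarith
  have hp2 : 2*(1+δ) ≤ (p:ℝ)^r := by
    have h2 : (800:ℝ) ≤ 400/ε := by rw [le_div_iff₀ hε]; linarith
    linarith
  have h1mβ : (0:ℝ) < 1 - β := by linarith
  set X : ℝ := Real.log p * ((n:ℝ) - 2*r) with hX
  have hn2rR : (1:ℝ) ≤ (n:ℝ) - 2*r := by
    have h4 : (2*r+1 : ℝ) ≤ (n:ℝ) := by exact_mod_cast h2r1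
    push_cast at h4 ⊢
    linarith
  have hX1 : (n:ℝ) - 2*r ≤ X := by
    rw [hX]
    nlinarith [hlogp, hn2rR]
  have hX0 : (0:ℝ) < X := by linarith
  set L : ℝ := (p:ℝ)^r * Real.log p * ((n:ℝ) - 2*r) with hL
  have hLX : L = (p:ℝ)^r * X := by rw [hL, hX]; ring
  have hL0 : (0:ℝ) ≤ L := by
    rw [hL]
    exact mul_nonneg (mul_nonneg (le_of_lt hpr0) (by linarith)) (by linarith)
  set m : ℕ := ⌈(1-ε)*L⌉₊ with hm
  have hm1 : (m:ℝ) ≤ (1-ε)*L + 1 := by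
    rw [hm]
    exact le_of_lt (Nat.ceil_lt_add_one (mul_nonneg (by linarith) hL0))
  have hlog8 : 0 ≤ Real.log (8/ε) := Real.log_nonneg (by rw [le_div_iff₀ hε]; linarith)
  have hXbig : (2/ε) * (1 + 2*Real.log (8/ε)) ≤ (n:ℝ) - 2*r := by
    have h1 : (2*r + 1 + (⌈(2/ε) * (1 + 2*Real.log (8/ε))⌉₊ : ℝ)) ≤ n := by
      exact_mod_cast hn0
    have h2 := Nat.le_ceil ((2/ε) * (1 + 2*Real.log (8/ε)))
    push_cast at h1 ⊢
    linarith
  have hcond : (p:ℝ)^(2*r)/δ^2 ≤ (1 - β)^m * (p:ℝ)^n := by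
    have hrhs : (0:ℝ) < (1 - β)^m * (p:ℝ)^n := mul_pos (pow_pos h1mβ m) (by positivity)
    rw [← Real.log_le_log_iff (by positivity) hrhs]
    rw [Real.log_mul (ne_of_gt (pow_pos h1mβ m)) (by positivity), Real.log_pow, Real.log_pow,
      Real.log_div (by positivity) (by positivity), Real.log_pow, Real.log_pow]
    have hneg : -Real.log (1-β) ≤ β*(1+2*β) := by
      have h2 := Real.log_le_sub_one_of_pos (x := (1-β)⁻¹) (by positivity)
      rw [Real.log_inv] at h2
      have h3 : (1-β)⁻¹ - 1 = β/(1-β) := by field_simp; ring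
      have h4 : β/(1-β) ≤ β*(1+2*β) := by
        rw [div_le_iff₀ h1mβ]
        have h9 : (0:ℝ) ≤ β^2*(1-2*β) := mul_nonneg (sq_nonneg β) (by linarith)
        nlinarith [h9]
      linarith
    have hmneg : (m:ℝ)*(-Real.log (1-β)) ≤ ((1-ε)*L + 1) * (β*(1+2*β)) := by
      apply mul_le_mul hm1 hneg
      · exact neg_nonneg.mpr (Real.log_nonpos (by linarith) (by linarith))
      · nlinarith [hL0]
    have hβsmall : β*(1+2*β) ≤ 1 := by nlinarith [hβ0, hβh]
    have hLβ : L * β = (1+δ) * X := by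
      rw [hLX, hβd]
      field_simp
    have hcoef : (1-ε)*(1+δ)*(1+2*β) ≤ 1 - ε/2 := by
      have c1 : (1-ε)*(1+δ) ≤ 1 - 7*ε/8 := by rw [hδ]; nlinarith [hε]
      have c2 : (1-ε)*(1+δ)*(1+2*β) ≤ (1 - 7*ε/8)*(1+2*β) :=
        mul_le_mul_of_nonneg_right c1 (by linarith)
      have c3 : (1 - 7*ε/8)*(1+2*β) ≤ 1 - ε/2 := by nlinarith [hβe, hβ0, hε]
      linarith
    have hfin1 : ((1-ε)*L + 1) * (β*(1+2*β)) ≤ (1 - ε/2)*X + 1 := by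
      have e1 : ((1-ε)*L + 1) * (β*(1+2*β)) = (1-ε)*(1+2*β)*(L*β) + β*(1+2*β) := by ring
      rw [e1, hLβ]
      have e2 : (1-ε)*(1+2*β)*((1+δ)*X) = ((1-ε)*(1+δ)*(1+2*β))*X := by ring
      rw [e2]
      have h5 := mul_le_mul_of_nonneg_right hcoef (le_of_lt hX0)
      linarith
    have hslack : (1 - ε/2)*X + 1 + 2*Real.log (8/ε) ≤ X := by
      have h6 : (2/ε)*(1+2*Real.log (8/ε)) ≤ X := le_trans hXbig hX1
      have h7 : (ε/2) * ((2/ε)*(1+2*Real.log (8/ε))) ≤ (ε/2)*X :=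
        mul_le_mul_of_nonneg_left h6 (by positivity)
      have h8 : (ε/2) * ((2/ε)*(1+2*Real.log (8/ε))) = 1+2*Real.log (8/ε) := by
        field_simp
      linarith [h7, h8]
    have hlogδ : Real.log δ = - Real.log (8/ε) := by
      rw [hδ, ← Real.log_inv, inv_div]
    have hnlog : (n:ℝ)*Real.log p = X + 2*(r:ℝ)*Real.log p := by rw [hX]; ring
    push_cast
    linarith [hmneg, hfin1, hslack, hlogδ, hnlog]
  have hGF := weak_mem hn1 hδ0 hp2 m hcond
  have hle : m ≤ optWeakCart r (FL p n) := le_csSup weak_bdd hGF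
  calc (1 - ε) * (p : ℝ) ^ r * Real.log p * ((n:ℝ) - 2 * r)
      = (1-ε)*L := by rw [hL]; ring
    _ ≤ (m:ℝ) := Nat.le_ceil _
    _ ≤ (optWeakCart r (FL p n) : ℝ) := by exact_mod_cast hle

theorem stmt8' (r : ℕ) (hr : 1 ≤ r) (ε : ℝ) (hε : 0 < ε) :
    ∃ p₀ : ℕ, ∀ p : ℕ, p.Prime → p₀ ≤ p → ∃ n₀ : ℕ, ∀ n : ℕ, max n₀ (2 * r + 1) ≤ n →
      optStd (FL p n) = n ∧
      (1 - ε) * (p : ℝ) ^ r * Real.log p * ((optStd (FL p n) : ℝ) - 2 * r)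
        ≤ (optWeakCart r (FL p n) : ℝ) := by
  set ε' : ℝ := min ε (1/2) with hε'
  have hε'0 : 0 < ε' := lt_min hε (by norm_num)
  have hε'2 : ε' ≤ 1/2 := min_le_right _ _
  have hε'ε : ε' ≤ ε := min_le_left _ _
  obtain ⟨p₀, hmain⟩ := main_small r hr ε' hε'0 hε'2
  refine ⟨p₀, fun p hp hge => ?_⟩
  obtain ⟨n₀, h2⟩ := hmain p hp hge
  refine ⟨n₀, fun n hn => ?_⟩
  obtain ⟨h3, h4⟩ := h2 n hn
  refine ⟨h3, le_trans ?_ h4⟩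
  have h2r1 : 2*r + 1 ≤ n := le_trans (le_max_right _ _) hn
  have hC : 0 ≤ (p:ℝ)^r * Real.log p * ((optStd (FL p n) : ℝ) - 2*r) := by
    rw [h3]
    have hp1 : (1:ℝ) ≤ p := by exact_mod_cast hp.one_lt.le
    have hlog : 0 ≤ Real.log p := Real.log_nonneg hp1
    have hnr : (0:ℝ) ≤ (n:ℝ) - 2*r := by
      have : (2*r+1 : ℝ) ≤ (n:ℝ) := by exact_mod_cast h2r1
      push_cast at this ⊢
      linarith
    positivity
  calc (1 - ε) * (p : ℝ) ^ r * Real.log p * ((optStd (FL p n) : ℝ) - 2 * r)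
      = (1-ε) * ((p:ℝ)^r * Real.log p * ((optStd (FL p n) : ℝ) - 2*r)) := by ring
    _ ≤ (1-ε') * ((p:ℝ)^r * Real.log p * ((optStd (FL p n) : ℝ) - 2*r)) :=
        mul_le_mul_of_nonneg_right (by linarith) hC
    _ = (1 - ε') * (p : ℝ) ^ r * Real.log p * ((optStd (FL p n) : ℝ) - 2 * r) := by ring

end Final

/-- Let `r ≥ 1`. For every `ε > 0` there exists `p₀` such that for every
prime `p ≥ p₀` there exists `n₀` such that for every `n ≥ max(n₀, 2r+1)`, the class
`F_L(p,n)` satisfies `opt_std(F_L(p,n)) = n` and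
`opt_weak(CART_r(F_L(p,n))) ≥ (1−ε)·p^r·ln p·(opt_std(F_L(p,n)) − 2r)`. -/
theorem stmt8 (r : ℕ) (hr : 1 ≤ r) (ε : ℝ) (hε : 0 < ε) :
    ∃ p₀ : ℕ, ∀ p : ℕ, p.Prime → p₀ ≤ p → ∃ n₀ : ℕ, ∀ n : ℕ, max n₀ (2 * r + 1) ≤ n →
      optStd (FL p n) = n ∧
      (1 - ε) * (p : ℝ) ^ r * Real.log p * ((optStd (FL p n) : ℝ) - 2 * r)
        ≤ (optWeakCart r (FL p n) : ℝ) := by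
  exact stmt8' r hr ε hε
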